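/- arXiv:1905.07068 — 3 statements merged into one kernel-verified Lean document; each statement's English description precedes it below -/
import Mathlib

section
/- Let $p$ be a prime integer and $k$ a field of $\operatorname{char}(k) = p$. Let $F = k((\alpha))((\beta))$ be the field of iterated Laurent series in two indeterminates over $k$. Then the Artin–Schreier polynomial $x^p - x - \beta^{-1}$ has no root in $F$; equivalently, $F[x : x^p - x = \beta^{-1}]$ is a field extension of $F$ of degree $p$. -/
noncomputable def IterLaurentAux (k : Type) [Field k] : ℕ → (T : Type) × Field T
  | 0 => ⟨k, inferInstance⟩
  | n + 1 =>
      letI := (IterLaurentAux k n).2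
      ⟨LaurentSeries (IterLaurentAux k n).1, inferInstance⟩

/-- The field of iterated Laurent series `k((α₁))…((αₙ))` in `n` indeterminates over `k`. -/
noncomputable def IterLaurent (k : Type) [Field k] (n : ℕ) : Type :=
  (IterLaurentAux k n).1

noncomputable instance IterLaurent.instField (k : Type) [Field k] (n : ℕ) :
    Field (IterLaurent k n) :=
  (IterLaurentAux k n).2

/-- The indeterminates of `k((α₁))…((αₙ))`: `IterLaurent.var k n i` is `α_{i+1}`
(so `i = 0` gives the innermost variable `α₁` and `i = n-1` the outermost one `αₙ`). -/
noncomputable def IterLaurent.var (k : Type) [Field k] : ∀ n, Fin n → IterLaurent k n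
  | n + 1, i =>
      Fin.lastCases
        (show IterLaurent k (n + 1) from
          (HahnSeries.single (1 : ℤ) (1 : IterLaurent k n) : LaurentSeries (IterLaurent k n)))
        (fun j => show IterLaurent k (n + 1) from
          (HahnSeries.C (IterLaurent.var k n j) : LaurentSeries (IterLaurent k n)))
        i

open Polynomial in
/-- In a field of characteristic `p`, every element satisfying `x ^ p = x` is a natural number. -/
theorem AS.pow_char_eq_self {L : Type*} [Field L] (p : ℕ) (hp : p.Prime) [CharP L p]
    {x : L} (hx : x ^ p = x) : ∃ n : ℕ, x = (n : L) := by
  classical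
  haveI : Fact p.Prime := ⟨hp⟩
  set φ : ZMod p →+* L := ZMod.castHom dvd_rfl L with hφ
  have hinj : Function.Injective φ := φ.injective
  set f : L[X] := X ^ p - X with hf
  have hfne : f ≠ 0 := by
    have hc : f.coeff p ≠ 0 := by
      rw [hf, coeff_sub, coeff_X_pow, if_pos rfl, coeff_X, if_neg hp.one_lt.ne]
      simp
    exact fun h0 => hc (by simp [h0])
  have hdeg : f.natDegree ≤ p := by
    have h1 : (X : L[X]).natDegree < (X ^ p : L[X]).natDegree := by
      simp [natDegree_X_pow, hp.one_lt]
    rw [hf, natDegree_sub_eq_left_of_natDegree_lt h1, natDegree_X_pow]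
  set T : Finset L := Finset.univ.image φ with hT
  have hTcard : T.card = p := by
    rw [hT, Finset.card_image_of_injective _ hinj, Finset.card_univ, ZMod.card]
  have hTsub : T ⊆ f.roots.toFinset := by
    intro y hy
    rw [hT, Finset.mem_image] at hy
    obtain ⟨i, -, rfl⟩ := hy
    rw [Multiset.mem_toFinset, mem_roots hfne]
    simp [hf, IsRoot, ← map_pow, ZMod.pow_card]
  have hcard : f.roots.toFinset.card ≤ p :=
    le_trans (Multiset.toFinset_card_le _) (le_trans (f.card_roots' ) hdeg)
  have hTeq : T = f.roots.toFinset :=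
    Finset.eq_of_subset_of_card_le hTsub (by omega)
  have hxr : x ∈ f.roots.toFinset := by
    rw [Multiset.mem_toFinset, mem_roots hfne]
    simp [hf, IsRoot, hx]
  rw [← hTeq, hT, Finset.mem_image] at hxr
  obtain ⟨i, -, rfl⟩ := hxr
  exact ⟨i.val, by rw [← map_natCast φ, ZMod.natCast_val, ZMod.cast_id]⟩

open Polynomial in
/-- The Artin–Schreier polynomial is irreducible over a field of characteristic `p`
whenever it has no root there. -/
theorem AS.irreducible {K : Type*} [Field K] (p : ℕ) (hp : p.Prime) [CharP K p]
    (a : K) (h : ¬ ∃ z : K, z ^ p - z = a) :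
    Irreducible (X ^ p - X - C a : K[X]) := by
  haveI : Fact p.Prime := ⟨hp⟩
  set f : K[X] := X ^ p - X - C a with hf
  have hp2 := hp.two_le
  have hfm : f.Monic := by
    have h2 : f = X ^ p - (X + C a) := by ring
    rw [h2]
    apply monic_X_pow_sub
    have hle : (X + C a : K[X]).degree ≤ 1 :=
      le_trans (degree_add_le _ _) (max_le degree_X_le (degree_C_le.trans zero_le_one))
    exact lt_of_le_of_lt hle (by exact_mod_cast hp.one_lt)
  have hfd : f.natDegree = p := by
    have h1 : (X + C a : K[X]).natDegree < (X ^ p : K[X]).natDegree := by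
      have hle : (X + C a : K[X]).natDegree ≤ 1 := natDegree_add_le_of_degree_le
        (by simp) (by simp [natDegree_C])
      simp only [natDegree_X_pow]; omega
    have h2 : f = X ^ p - (X + C a) := by ring
    rw [h2, natDegree_sub_eq_left_of_natDegree_lt h1, natDegree_X_pow]
  set L := AlgebraicClosure K
  set ι : K →+* L := algebraMap K L with hι
  haveI : CharP L p := charP_of_injective_ringHom ι.injective p
  have hfmap : (f.map ι).natDegree = p := by rw [natDegree_map, hfd]
  have hfmapne : f.map ι ≠ 0 := by
    intro h0; rw [h0, natDegree_zero] at hfmap; exact hp.ne_zero hfmap.symm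
  obtain ⟨α, hα⟩ := IsAlgClosed.exists_root (f.map ι)
    (by rw [degree_eq_natDegree hfmapne, hfmap]; exact_mod_cast hp.pos.ne')
  have hαval : α ^ p - α = ι a := by
    have h1 := hα
    rw [IsRoot, hf] at h1
    simp only [Polynomial.map_sub, Polynomial.map_pow, map_X, map_C, eval_sub,
      eval_pow, eval_X, eval_C] at h1
    linear_combination h1
  have haev : (Polynomial.aeval α) f = 0 := by
    rw [hf]
    simp only [map_sub, map_pow, aeval_X, aeval_C]
    show α ^ p - α - ι a = 0
    linear_combination hαval
  have hint : IsIntegral K α := ⟨f, hfm, by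
    rwa [← Polynomial.aeval_def]⟩
  set g := minpoly K α with hg
  have hgm : g.Monic := minpoly.monic hint
  have hgdvd : g ∣ f := minpoly.dvd K α haev
  have hgd1 : 1 ≤ g.natDegree := minpoly.natDegree_pos hint
  have hgdp : g.natDegree ≤ p := by
    have := Polynomial.natDegree_le_of_dvd hgdvd hfm.ne_zero
    omega
  -- main step: natDegree g = p
  have hkey : g.natDegree = p := by
    by_contra hne
    set d := g.natDegree with hd
    have hdlt : d < p := lt_of_le_of_ne hgdp hne
    -- roots of g.map ι
    have hgmapm : (g.map ι).Monic := hgm.map ι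
    have hsplit : Splits (g.map ι) :=
      IsAlgClosed.splits (g.map ι)
    set M := (g.map ι).roots with hM
    have hMcard : M.card = d := by
      rw [hM, (splits_iff_card_roots).mp hsplit, natDegree_map]
    have hprodd : g.map ι = (M.map fun b => X - C b).prod :=
      hsplit.eq_prod_roots_of_monic hgmapm
    -- every root of g.map ι is a root of f.map ι
    have hroot : ∀ b ∈ M, b ^ p - b = ι a := by
      intro b hb
      have hb' : (g.map ι).IsRoot b := isRoot_of_mem_roots hb
      have : (f.map ι).IsRoot b := by
        obtain ⟨q, hq⟩ := hgdvd
        rw [IsRoot, hq, Polynomial.map_mul, eval_mul, hb', zero_mul]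
      rw [IsRoot, hf] at this
      simp only [Polynomial.map_sub, Polynomial.map_pow, map_X, map_C, eval_sub,
        eval_pow, eval_X, eval_C] at this
      linear_combination this
    -- the sum of roots minus d • α is fixed by Frobenius
    have hc : ∀ N : Multiset L, (∀ b ∈ N, b ^ p - b = ι a) →
        (N.sum - N.card • α) ^ p = N.sum - N.card • α := by
      intro N
      induction N using Multiset.induction with
      | empty => intro _; simp [zero_pow hp.pos.ne']
      | cons b N ih =>
        intro hN
        have hb : b ^ p - b = ι a := hN b (Multiset.mem_cons_self _ _)
        have hN' := ih fun x hx => hN x (Multiset.mem_cons_of_mem hx)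
        have : (b + N.sum) - (N.card + 1) • α
            = (b - α) + (N.sum - N.card • α) := by
          rw [add_smul, one_smul]; ring
        rw [Multiset.sum_cons, Multiset.card_cons, this, add_pow_char, hN']
        have hba : (b - α) ^ p = b - α := by
          rw [sub_pow_char]
          have h1 : b ^ p = b + ι a := by rw [← hb]; ring
          have h2 : α ^ p = α + ι a := by rw [← hαval]; ring
          rw [h1, h2]; ring
        rw [hba]
    have hcM := hc M hroot
    obtain ⟨n, hn⟩ := AS.pow_char_eq_self p hp hcM
    -- next coefficient
    have hnext : ι g.nextCoeff = -M.sum := by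
      rw [← nextCoeff_map ι.injective, hprodd, multiset_prod_X_sub_C_nextCoeff]
    have hMsum : M.sum = -(ι g.nextCoeff) := by rw [hnext]; ring
    -- solve for α
    have hdK : (d : K) ≠ 0 := by
      intro h0
      have := (CharP.cast_eq_zero_iff K p d).mp h0
      exact absurd this (Nat.not_dvd_of_pos_of_lt (by omega) hdlt)
    have hdL : (d : L) ≠ 0 := by
      intro h0
      have := (CharP.cast_eq_zero_iff L p d).mp h0
      exact absurd this (Nat.not_dvd_of_pos_of_lt (by omega) hdlt)
    have hα_eq : α = ι ((-(g.nextCoeff) - (n : K)) / ((d : K))) := by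
      have h1 : M.sum - (d : ℕ) • α = (n : L) := by rw [← hMcard, ← hn]
      have h2 : (d : ℕ) • α = -(ι g.nextCoeff) - (n : L) := by
        rw [← hMsum]; linear_combination -h1
      rw [map_div₀, map_sub, map_neg, map_natCast, map_natCast, eq_div_iff hdL,
        mul_comm, ← nsmul_eq_mul]
      exact h2
    set z := (-(g.nextCoeff) - (n : K)) / ((d : K)) with hz
    refine h ⟨z, ι.injective ?_⟩
    rw [map_sub, map_pow, ← hα_eq, hαval]
  -- conclude g = f
  obtain ⟨q, hq⟩ := hgdvd
  have hqd : q.natDegree = 0 := by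
    have := hfd
    rw [hq, natDegree_mul (hgm.ne_zero)
      (fun h0 => by rw [h0, mul_zero] at hq; exact hfm.ne_zero hq), hkey] at this
    omega
  have hq1 : q = 1 := by
    have hlc : q.leadingCoeff = 1 := by
      have hm := hfm
      rw [hq, Monic, leadingCoeff_mul, hgm.leadingCoeff, one_mul] at hm
      exact hm
    exact eq_one_of_monic_natDegree_zero hlc hqd
  have hgf : g = f := by rw [hq, hq1, mul_one]
  rw [← hgf]
  exact minpoly.irreducible hint

/-- The Artin–Schreier equation `z ^ p - z = β⁻¹` has no solution in `K((β))`. -/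
theorem AS.no_root_laurent (K : Type*) [Field K] (p : ℕ) (hp : p.Prime) :
    ¬ ∃ z : LaurentSeries K,
      z ^ p - z = (HahnSeries.single (1 : ℤ) (1 : K) : LaurentSeries K)⁻¹ := by
  set β : LaurentSeries K := HahnSeries.single (1 : ℤ) (1 : K) with hβdef
  have hp2 := hp.two_le
  have hβinv : β⁻¹ = (HahnSeries.single (-1 : ℤ) (1 : K) : LaurentSeries K) := by
    symm
    apply eq_inv_of_mul_eq_one_left
    rw [hβdef, HahnSeries.single_mul_single, neg_add_cancel, mul_one,
      HahnSeries.single_zero_one]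
  rintro ⟨z, hz⟩
  rw [hβinv] at hz
  rcases eq_or_ne z 0 with rfl | hzne
  · rw [zero_pow hp.pos.ne', sub_zero] at hz
    exact HahnSeries.single_ne_zero one_ne_zero hz.symm
  have hzp : z ^ p ≠ 0 := pow_ne_zero _ hzne
  have hord : (z ^ p).order = (p : ℤ) * z.order := by
    rw [HahnSeries.order_pow]
    simp [zsmul_eq_mul]
  rcases lt_or_ge z.order 0 with hv | hv
  · -- order of z is negative
    have hv1 : z.order ≤ -1 := by omega
    have hlt : (p : ℤ) * z.order < z.order := by nlinarith
    have hne1 : (p : ℤ) * z.order ≠ -1 := by nlinarith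
    have hco := congrArg (fun w => HahnSeries.coeff w ((p : ℤ) * z.order)) hz
    simp only [HahnSeries.coeff_sub] at hco
    rw [HahnSeries.coeff_eq_zero_of_lt_order hlt, HahnSeries.coeff_single_of_ne hne1,
      sub_zero] at hco
    exact HahnSeries.leadingCoeff_ne_zero.mpr hzp (by rw [HahnSeries.leadingCoeff_eq, hord]; exact hco)
  · -- order of z is nonnegative
    have hpo : (-1 : ℤ) < (z ^ p).order := by
      rw [hord]
      have h0 : (0 : ℤ) ≤ (p : ℤ) * z.order := mul_nonneg (by positivity) hv
      omega
    have hco := congrArg (fun w => HahnSeries.coeff w (-1 : ℤ)) hz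
    simp only [HahnSeries.coeff_sub] at hco
    rw [HahnSeries.coeff_eq_zero_of_lt_order (by omega : (-1 : ℤ) < z.order),
      HahnSeries.coeff_eq_zero_of_lt_order hpo, HahnSeries.coeff_single_same,
      sub_zero] at hco
    exact one_ne_zero hco.symm

/-- Let `p` be prime and `k` a field of characteristic `p`. In the field
`F = k((α))((β))` of iterated Laurent series in two indeterminates, the Artin–Schreier
polynomial `x^p - x - β⁻¹` has no root; equivalently, it is irreducible over `F`, so that
`F[x : x^p - x = β⁻¹]` is a field extension of `F` of degree `p`. -/
theorem iterLaurent_artinSchreier_no_root (p : ℕ) (hp : p.Prime) (k : Type) [Field k]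
    [CharP k p] :
    (¬ ∃ z : IterLaurent k 2, z ^ p - z = (IterLaurent.var k 2 1)⁻¹) ∧
    Irreducible (Polynomial.X ^ p - Polynomial.X -
      Polynomial.C (IterLaurent.var k 2 1)⁻¹ : Polynomial (IterLaurent k 2)) := by
  haveI h1 : CharP (IterLaurent k 1) p :=
    charP_of_injective_ringHom
      (HahnSeries.C_injective (Γ := ℤ) (R := k) : Function.Injective
        (HahnSeries.C : k →+* LaurentSeries k)) p
  haveI h2 : CharP (IterLaurent k 2) p :=
    charP_of_injective_ringHom
      (HahnSeries.C_injective (Γ := ℤ) (R := IterLaurent k 1) : Function.Injective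
        (HahnSeries.C : IterLaurent k 1 →+* LaurentSeries (IterLaurent k 1))) p
  have hvar : IterLaurent.var k 2 1 =
      (HahnSeries.single (1 : ℤ) (1 : IterLaurent k 1) :
        LaurentSeries (IterLaurent k 1)) := by
    show IterLaurent.var k (1 + 1) (Fin.last 1) = _
    rw [IterLaurent.var, Fin.lastCases_last]
  have hnr : ¬ ∃ z : IterLaurent k 2, z ^ p - z = (IterLaurent.var k 2 1)⁻¹ := by
    rw [hvar]
    exact AS.no_root_laurent (IterLaurent k 1) p hp
  exact ⟨hnr, AS.irreducible p hp _ hnr⟩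
end

section
/- Let $k$ be a field of $\operatorname{char}(k) = 2$, $n \geq 2$, and $F = k((\alpha_1))\dots((\alpha_{n+1}))$ the field of iterated Laurent series in $n+1$ indeterminates over $k$. Let $\varphi = \langle\!\langle \alpha_1,\dots,\alpha_{n-2},\alpha_{n-1},\alpha_n^{-1}]]$ and $\psi = \langle\!\langle \alpha_1,\dots,\alpha_{n-2},\alpha_n,\alpha_{n+1}^{-1}]]$. Then the orthogonal sum $\varphi \perp \psi$ is Witt equivalent to $\omega = \langle\!\langle \alpha_1,\dots,\alpha_{n-2}\rangle\!\rangle \otimes [1, \alpha_n^{-1}+\alpha_{n+1}^{-1}] \perp \alpha_{n-1}\,\langle\!\langle \alpha_1,\dots,\alpha_{n-2}\rangle\!\rangle \otimes [1, \alpha_n^{-1}] \perp \alpha_n\,\langle\!\langle \alpha_1,\dots,\alpha_{n-2}\rangle\!\rangle \otimes [1, \alpha_{n+1}^{-1}]$. -/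
/-- The quadratic form `v ↦ ∑ i j, M i j * v i * v j` on `ι → F` given by a matrix `M`. -/
noncomputable def quadOfMatrix (F : Type) [Field F] {ι : Type} [Fintype ι] [DecidableEq ι]
    (M : Matrix ι ι F) : QuadraticForm F (ι → F) :=
  LinearMap.BilinMap.toQuadraticMap (Matrix.toLinearMap₂' F M)

/-- The (diagonal) Gram matrix of the bilinear `m`-fold Pfister form `⟨⟨a₁,…,aₘ⟩⟩`
(characteristic `2`), indexed by `e : Fin m → Bool`, with diagonal entries the
monomials `∏ aᵢ^{eᵢ}`. -/
noncomputable def pfisterMatrix (F : Type) [Field F] {m : ℕ} (a : Fin m → F) :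
    Matrix (Fin m → Bool) (Fin m → Bool) F :=
  Matrix.diagonal fun e => ∏ i, if e i then a i else 1

/-- Matrix of the binary quadratic form `[a,b] : (x,y) ↦ a x² + x y + b y²`. -/
def binaryMatrix (F : Type) [Field F] (a b : F) : Matrix Bool Bool F :=
  fun i j =>
    match i, j with
    | false, false => a
    | false, true => 1
    | true, false => 0
    | true, true => b

/-- Matrix of the quadratic `(m+1)`-fold Pfister form `⟨⟨a₁,…,aₘ, b]] = ⟨⟨a₁,…,aₘ⟩⟩ ⊗ [1,b]`
in characteristic `2`. -/
noncomputable def quadPfisterMatrix (F : Type) [Field F] {m : ℕ} (a : Fin m → F) (b : F) :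
    Matrix ((Fin m → Bool) × Bool) ((Fin m → Bool) × Bool) F :=
  Matrix.kroneckerMap (· * ·) (pfisterMatrix F a) (binaryMatrix F 1 b)

/-- The quadratic `(m+1)`-fold Pfister form `⟨⟨a₁,…,aₘ, b]]` in characteristic `2`. -/
noncomputable def quadPfister (F : Type) [Field F] {m : ℕ} (a : Fin m → F) (b : F) :
    QuadraticForm F (((Fin m → Bool) × Bool) → F) :=
  quadOfMatrix F (quadPfisterMatrix F a b)

/-- Matrix of the hyperbolic quadratic form of rank `k`:
`v ↦ ∑ i, v (i, false) * v (i, true)`. -/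
def hypMatrix (F : Type) [Field F] (k : ℕ) : Matrix (Fin k × Bool) (Fin k × Bool) F :=
  fun x y => if x.1 = y.1 ∧ x.2 = false ∧ y.2 = true then 1 else 0

/-- Witt equivalence of quadratic forms: the two forms become isometric after adding
suitable hyperbolic forms. -/
def WittEquivalent (F : Type) [Field F] {V₁ V₂ : Type} [AddCommGroup V₁] [Module F V₁]
    [AddCommGroup V₂] [Module F V₂] (q₁ : QuadraticForm F V₁) (q₂ : QuadraticForm F V₂) :
    Prop :=
  ∃ k l : ℕ, QuadraticMap.Equivalent
    (q₁.prod (quadOfMatrix F (hypMatrix F k))) (q₂.prod (quadOfMatrix F (hypMatrix F l)))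

/-- The symmetric bilinear form given by the matrix `M` is anisotropic:
`vᵀ M v ≠ 0` for all `v ≠ 0`. -/
def Matrix.BilinAnisotropic {F : Type} [Field F] {ι : Type} [Fintype ι]
    (M : Matrix ι ι F) : Prop :=
  ∀ v : ι → F, v ≠ 0 → dotProduct v (M.mulVec v) ≠ 0

/-- The bilinear forms given by the matrices `M` and `N` are isometric:
`N = Pᵀ M P` for some invertible matrix `P`. -/
def Matrix.BilinIsometric {F : Type} [Field F] {ι : Type} [Fintype ι] [DecidableEq ι]
    (M N : Matrix ι ι F) : Prop :=
  ∃ P : Matrix ι ι F, IsUnit P.det ∧ N = P.transpose * M * P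


section
variable (k : Type) [Field k]

theorem IterLaurent.var_ne_zero : ∀ (n : ℕ) (i : Fin n), IterLaurent.var k n i ≠ 0
  | n + 1, i => by
    induction i using Fin.lastCases with
    | last =>
      rw [IterLaurent.var, Fin.lastCases_last]
      exact HahnSeries.single_ne_zero one_ne_zero
    | cast j =>
      rw [IterLaurent.var, Fin.lastCases_castSucc]
      exact HahnSeries.C_ne_zero (IterLaurent.var_ne_zero n j)

theorem IterLaurent.two_eq_zero [CharP k 2] : ∀ n : ℕ, (2 : IterLaurent k n) = 0
  | 0 => by
      have h := CharP.cast_eq_zero k 2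
      push_cast at h
      exact h
  | n + 1 => by
      show (2 : LaurentSeries (IterLaurent k n)) = 0
      have : (HahnSeries.C (2 : IterLaurent k n) : LaurentSeries (IterLaurent k n)) = 2 :=
        map_ofNat _ 2
      rw [← this, IterLaurent.two_eq_zero n, map_zero]
end

section
variable {F : Type} [Field F]

theorem block_core (h2 : (2 : F) = 0) (c t s x1 x2 y3 x4 : F) :
    c * ((x1 + y3 + s * x4) * (x1 + y3 + s * x4) + (x1 + y3 + s * x4) * x2 + t * (x2 * x2)) +
      c * ((y3 + s * x4) * (y3 + s * x4) + (y3 + s * x4) * (x2 + x4) +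
        s * ((x2 + x4) * (x2 + x4))) =
    c * (x1 * x1 + x1 * x2 + (t + s) * (x2 * x2)) + c * y3 * x4 := by
  linear_combination (c * (y3^2 + s^2*x4^2 + x1*y3 + s*x1*x4 + 2*s*y3*x4 + y3*x2
    + 2*s*x2*x4 + s*x4^2)) * h2
end

section
variable (F : Type) [Field F]

theorem quadOfMatrix_apply {ι : Type} [Fintype ι] [DecidableEq ι] (M : Matrix ι ι F)
    (v : ι → F) : quadOfMatrix F M v = ∑ i, ∑ j, v i * v j * M i j := by
  simp [quadOfMatrix, Matrix.toLinearMap₂'_apply, smul_eq_mul, mul_assoc]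

theorem quadOfMatrix_smul {ι : Type} [Fintype ι] [DecidableEq ι] (c : F) (M : Matrix ι ι F)
    (v : ι → F) : quadOfMatrix F (c • M) v = c * quadOfMatrix F M v := by
  simp only [quadOfMatrix_apply, Matrix.smul_apply, smul_eq_mul, Finset.mul_sum]
  exact Finset.sum_congr rfl fun i _ => Finset.sum_congr rfl fun j _ => by ring

theorem quadPfister_closed {m : ℕ} (a : Fin m → F) (b : F)
    (v : ((Fin m → Bool) × Bool) → F) :
    quadOfMatrix F (quadPfisterMatrix F a b) v =
      ∑ e : Fin m → Bool, (∏ i, if e i then a i else 1) *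
        (v (e, false) * v (e, false) + v (e, false) * v (e, true) +
          b * (v (e, true) * v (e, true))) := by
  rw [quadOfMatrix_apply]
  rw [Fintype.sum_prod_type]
  refine Finset.sum_congr rfl fun e _ => ?_
  simp only [Fintype.sum_bool, Fintype.sum_prod_type]
  simp only [quadPfisterMatrix, pfisterMatrix, Matrix.kroneckerMap_apply, Matrix.diagonal_apply,
    binaryMatrix]
  simp only [mul_ite, ite_mul, mul_zero, zero_mul, mul_one, mul_add, add_mul,
    Finset.sum_ite_eq, Finset.mem_univ, if_true, Finset.sum_add_distrib, Finset.sum_const_zero, add_zero]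
  ring

theorem hyp_closed (l : ℕ) (v : (Fin l × Bool) → F) :
    quadOfMatrix F (hypMatrix F l) v = ∑ i : Fin l, v (i, false) * v (i, true) := by
  rw [quadOfMatrix_apply, Fintype.sum_prod_type]
  simp only [Fintype.sum_bool, Fintype.sum_prod_type, hypMatrix]
  simp only [mul_ite, mul_one, mul_zero]
  simp [Finset.sum_ite_eq']
end

section KeyWitt

variable (F : Type) [Field F] (m : ℕ)

/-- diagonal monomials of the bilinear Pfister form -/
def dmon (a : Fin m → F) (e : Fin m → Bool) : F := ∏ i, if e i then a i else 1

theorem dmon_ne_zero (a : Fin m → F) (ha : ∀ i, a i ≠ 0) (e : Fin m → Bool) :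
    dmon F m a e ≠ 0 :=
  Finset.prod_ne_zero_iff.2 fun i _ => by
    by_cases h : e i <;> simp [h, ha i]

/-- the equivalence used to index hyperbolic planes -/
noncomputable def hypIdx : (Fin m → Bool) ≃ Fin (Fintype.card (Fin m → Bool)) :=
  Fintype.equivFin _

/-- forward map (from the `ω ⊥ hyp` space to the `φ ⊥ ψ ⊥ hyp 0` space) -/
noncomputable def fwdFun (a : Fin m → F) (s : F)
    (w : (((((Fin m → Bool) × Bool) → F) × (((Fin m → Bool) × Bool) → F)) ×
            (((Fin m → Bool) × Bool) → F)) ×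
          ((Fin (Fintype.card (Fin m → Bool)) × Bool) → F)) :
    (((((Fin (m + 1) → Bool) × Bool) → F) × (((Fin (m + 1) → Bool) × Bool) → F)) ×
      ((Fin 0 × Bool) → F)) :=
  ((fun p => if p.1 (Fin.last m) then w.1.1.2 (fun i => p.1 (Fin.castSucc i), p.2)
      else if p.2 then w.1.1.1 (fun i => p.1 (Fin.castSucc i), true)
      else w.1.1.1 (fun i => p.1 (Fin.castSucc i), false)
        + (dmon F m a (fun i => p.1 (Fin.castSucc i)))⁻¹ *
            w.2 (hypIdx m (fun i => p.1 (Fin.castSucc i)), false)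
        + s * w.2 (hypIdx m (fun i => p.1 (Fin.castSucc i)), true),
    fun p => if p.1 (Fin.last m) then w.1.2 (fun i => p.1 (Fin.castSucc i), p.2)
      else if p.2 then w.1.1.1 (fun i => p.1 (Fin.castSucc i), true)
        + w.2 (hypIdx m (fun i => p.1 (Fin.castSucc i)), true)
      else (dmon F m a (fun i => p.1 (Fin.castSucc i)))⁻¹ *
            w.2 (hypIdx m (fun i => p.1 (Fin.castSucc i)), false)
        + s * w.2 (hypIdx m (fun i => p.1 (Fin.castSucc i)), true)),
   0)

/-- backward map -/
noncomputable def bwdFun (a : Fin m → F) (s : F)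
    (u : (((((Fin (m + 1) → Bool) × Bool) → F) × (((Fin (m + 1) → Bool) × Bool) → F)) ×
            ((Fin 0 × Bool) → F))) :
    (((((Fin m → Bool) × Bool) → F) × (((Fin m → Bool) × Bool) → F)) ×
        (((Fin m → Bool) × Bool) → F)) ×
      ((Fin (Fintype.card (Fin m → Bool)) × Bool) → F) :=
  (((fun p => if p.2 then u.1.1 (Fin.snoc p.1 false, true)
       else u.1.1 (Fin.snoc p.1 false, false) + u.1.2 (Fin.snoc p.1 false, false),
     fun p => u.1.1 (Fin.snoc p.1 true, p.2)),
    fun p => u.1.2 (Fin.snoc p.1 true, p.2)),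
   fun q => if q.2 then u.1.1 (Fin.snoc ((hypIdx m).symm q.1) false, true)
       + u.1.2 (Fin.snoc ((hypIdx m).symm q.1) false, true)
     else dmon F m a ((hypIdx m).symm q.1) *
       (u.1.2 (Fin.snoc ((hypIdx m).symm q.1) false, false)
         + s * (u.1.1 (Fin.snoc ((hypIdx m).symm q.1) false, true)
           + u.1.2 (Fin.snoc ((hypIdx m).symm q.1) false, true))))

noncomputable def fwdMap (a : Fin m → F) (s : F) :
    ((((((Fin m → Bool) × Bool) → F) × (((Fin m → Bool) × Bool) → F)) ×
            (((Fin m → Bool) × Bool) → F)) ×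
          ((Fin (Fintype.card (Fin m → Bool)) × Bool) → F)) →ₗ[F]
    (((((Fin (m + 1) → Bool) × Bool) → F) × (((Fin (m + 1) → Bool) × Bool) → F)) ×
      ((Fin 0 × Bool) → F)) where
  toFun := fwdFun F m a s
  map_add' w w' := by
    refine Prod.ext (Prod.ext ?_ ?_) ?_ <;> funext p <;>
      simp only [fwdFun, Prod.fst_add, Prod.snd_add, Pi.add_apply, Pi.zero_apply] <;>
      (try split_ifs) <;> ring
  map_smul' c w := by
    refine Prod.ext (Prod.ext ?_ ?_) ?_ <;> funext p <;>
      simp only [fwdFun, Prod.smul_fst, Prod.smul_snd, Pi.smul_apply, smul_eq_mul,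
        RingHom.id_apply, Pi.zero_apply] <;>
      (try split_ifs) <;> ring

noncomputable def bwdMap (a : Fin m → F) (s : F) :
    ((((((Fin (m + 1) → Bool) × Bool) → F) × (((Fin (m + 1) → Bool) × Bool) → F)) ×
      ((Fin 0 × Bool) → F))) →ₗ[F]
    ((((((Fin m → Bool) × Bool) → F) × (((Fin m → Bool) × Bool) → F)) ×
            (((Fin m → Bool) × Bool) → F)) ×
          ((Fin (Fintype.card (Fin m → Bool)) × Bool) → F)) where
  toFun := bwdFun F m a s
  map_add' u u' := by
    refine Prod.ext (Prod.ext (Prod.ext ?_ ?_) ?_) ?_ <;> funext p <;>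
      simp only [bwdFun, Prod.fst_add, Prod.snd_add, Pi.add_apply, Pi.zero_apply] <;>
      (try split_ifs) <;> ring
  map_smul' c u := by
    refine Prod.ext (Prod.ext (Prod.ext ?_ ?_) ?_) ?_ <;> funext p <;>
      simp only [bwdFun, Prod.smul_fst, Prod.smul_snd, Pi.smul_apply, smul_eq_mul,
        RingHom.id_apply, Pi.zero_apply] <;>
      (try split_ifs) <;> ring

end KeyWitt

section KeyWitt2
variable (F : Type) [Field F] (m : ℕ)

theorem bwd_fwd (a : Fin m → F) (ha : ∀ i, a i ≠ 0) (h2 : (2 : F) = 0) (s : F) :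
    (bwdMap F m a s).comp (fwdMap F m a s) = LinearMap.id := by
  refine LinearMap.ext fun w => ?_
  refine Prod.ext (Prod.ext (Prod.ext ?_ ?_) ?_) ?_ <;> funext p <;>
    obtain ⟨e, b⟩ := p <;> cases b <;>
    simp only [LinearMap.comp_apply, LinearMap.id_apply, fwdMap, bwdMap, fwdFun, bwdFun,
      LinearMap.coe_mk, AddHom.coe_mk, Fin.snoc_last, Fin.snoc_castSucc,
      Equiv.symm_apply_apply, Equiv.apply_symm_apply, if_true, if_false,
      Bool.false_eq_true, Bool.true_eq_false, ite_true, ite_false]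
  · -- w1 (e, false)
    linear_combination ((dmon F m a e)⁻¹ * w.2 (hypIdx m e, false)
      + s * w.2 (hypIdx m e, true)) * h2
  · -- h (j, false)
    linear_combination w.2 (e, false) * mul_inv_cancel₀ (dmon_ne_zero F m a ha ((hypIdx m).symm e))
      + (dmon F m a ((hypIdx m).symm e) * s * (w.2 (e, true)
        + w.1.1.1 ((hypIdx m).symm e, true))) * h2
  · -- h (j, true)
    linear_combination w.1.1.1 ((hypIdx m).symm e, true) * h2
end KeyWitt2

section KeyWitt3
variable (F : Type) [Field F] (m : ℕ)

theorem fwd_bwd (a : Fin m → F) (ha : ∀ i, a i ≠ 0) (h2 : (2 : F) = 0) (s : F) :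
    (fwdMap F m a s).comp (bwdMap F m a s) = LinearMap.id := by
  refine LinearMap.ext fun u => ?_
  refine Prod.ext (Prod.ext ?_ ?_) ?_
  case refine_3 => funext q; exact q.1.elim0
  all_goals
    funext p
    obtain ⟨E, i⟩ := p
    induction E using Fin.snocCases
    rename_i e b
    cases b <;> cases i <;>
    simp only [LinearMap.comp_apply, LinearMap.id_apply, fwdMap, bwdMap, fwdFun, bwdFun,
      LinearMap.coe_mk, AddHom.coe_mk, Fin.snoc_last, Fin.snoc_castSucc,
      Fin.init_snoc, Equiv.symm_apply_apply, Equiv.apply_symm_apply, if_true, if_false,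
      Bool.false_eq_true, Bool.true_eq_false, ite_true, ite_false]
  case refine_1 =>
    linear_combination (u.1.2 (Fin.snoc e false, false)
        + s * (u.1.1 (Fin.snoc e false, true) + u.1.2 (Fin.snoc e false, true))) *
        inv_mul_cancel₀ (dmon_ne_zero F m a ha e)
      + (u.1.2 (Fin.snoc e false, false)
        + s * (u.1.1 (Fin.snoc e false, true) + u.1.2 (Fin.snoc e false, true))) * h2
  case refine_2.snoc.false.false =>
    linear_combination (u.1.2 (Fin.snoc e false, false)
        + s * (u.1.1 (Fin.snoc e false, true) + u.1.2 (Fin.snoc e false, true))) *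
        inv_mul_cancel₀ (dmon_ne_zero F m a ha e)
      + (s * (u.1.1 (Fin.snoc e false, true) + u.1.2 (Fin.snoc e false, true))) * h2
  case refine_2.snoc.false.true =>
    linear_combination u.1.1 (Fin.snoc e false, true) * h2
end KeyWitt3

section KeyWitt4
variable (F : Type) [Field F] (m : ℕ)

def snocE : ((Fin m → Bool) × Bool) ≃ (Fin (m + 1) → Bool) where
  toFun p := Fin.snoc p.1 p.2
  invFun E := (fun i => E (Fin.castSucc i), E (Fin.last m))
  left_inv p := by
    obtain ⟨e, b⟩ := p
    refine Prod.ext ?_ ?_ <;> simp [Fin.snoc_castSucc, Fin.snoc_last]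
  right_inv E := Fin.snoc_init_self E

theorem sum_snoc (f : (Fin (m + 1) → Bool) → F) :
    ∑ E, f E = ∑ e : Fin m → Bool, (f (Fin.snoc e false) + f (Fin.snoc e true)) := by
  rw [← Equiv.sum_comp (snocE m) f, Fintype.sum_prod_type]
  refine Finset.sum_congr rfl fun e _ => ?_
  rw [Fintype.sum_bool]
  show f (Fin.snoc e true) + f (Fin.snoc e false) = f (Fin.snoc e false) + f (Fin.snoc e true)
  ring

theorem dmon_eq (a : Fin m → F) (e : Fin m → Bool) :
    (∏ i, if e i = true then a i else 1) = dmon F m a e := rfl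

theorem prod_snoc_false (a : Fin m → F) (c : F) (e : Fin m → Bool) :
    (∏ i, if (Fin.snoc e false : Fin (m + 1) → Bool) i = true
      then (Fin.snoc a c : Fin (m + 1) → F) i else 1) = dmon F m a e := by
  rw [Fin.prod_univ_castSucc]
  simp [Fin.snoc_castSucc, Fin.snoc_last, dmon]

theorem prod_snoc_true (a : Fin m → F) (c : F) (e : Fin m → Bool) :
    (∏ i, if (Fin.snoc e true : Fin (m + 1) → Bool) i = true
      then (Fin.snoc a c : Fin (m + 1) → F) i else 1) = dmon F m a e * c := by
  rw [Fin.prod_univ_castSucc]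
  simp [Fin.snoc_castSucc, Fin.snoc_last, dmon]

theorem keyWitt (h2 : (2 : F) = 0) (a : Fin m → F) (ha : ∀ i, a i ≠ 0) (A B t s : F) :
    WittEquivalent F
      ((quadPfister F (Fin.snoc a A) t).prod (quadPfister F (Fin.snoc a B) s))
      (((quadOfMatrix F (quadPfisterMatrix F a (t + s))).prod
          (quadOfMatrix F (A • quadPfisterMatrix F a t))).prod
        (quadOfMatrix F (B • quadPfisterMatrix F a s))) := by
  refine ⟨0, Fintype.card (Fin m → Bool), ?_⟩
  refine ⟨QuadraticMap.IsometryEquiv.symm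
    { toLinearEquiv := LinearEquiv.ofLinear (fwdMap F m a s) (bwdMap F m a s)
        (fwd_bwd F m a ha h2 s) (bwd_fwd F m a ha h2 s)
      map_app' := fun w => ?_ }⟩
  show ((quadPfister F (Fin.snoc a A) t).prod (quadPfister F (Fin.snoc a B) s)).prod
      (quadOfMatrix F (hypMatrix F 0)) (fwdFun F m a s w) = _
  obtain ⟨⟨⟨w1, w2⟩, w3⟩, h⟩ := w
  simp only [QuadraticMap.prod_apply, quadPfister, quadPfister_closed, quadOfMatrix_smul,
    hyp_closed, fwdFun, Finset.univ_eq_empty, Finset.sum_empty, add_zero]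
  rw [sum_snoc, sum_snoc, ← Equiv.sum_comp (hypIdx m) (fun j => h (j, false) * h (j, true))]
  simp only [prod_snoc_false, prod_snoc_true, Fin.snoc_last, Fin.snoc_castSucc,
    if_true, if_false, Bool.false_eq_true, Bool.true_eq_false, ite_true, ite_false,
    dmon_eq, Finset.mul_sum]
  simp only [← Finset.sum_add_distrib]
  refine Finset.sum_congr rfl fun e _ => ?_
  linear_combination block_core h2 (dmon F m a e) t s (w1 (e, false)) (w1 (e, true))
      ((dmon F m a e)⁻¹ * h (hypIdx m e, false)) (h (hypIdx m e, true))
    + (h (hypIdx m e, false) * h (hypIdx m e, true)) *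
        mul_inv_cancel₀ (dmon_ne_zero F m a ha e)
end KeyWitt4

/-- Let `k` be a field of characteristic `2`, `n = m+2 ≥ 2`, and
`F = k((α₁))…((α_{n+1}))`. Let `φ = ⟨⟨α₁,…,α_{n-1}, αₙ⁻¹]]` and
`ψ = ⟨⟨α₁,…,α_{n-2}, αₙ, α_{n+1}⁻¹]]`. Then `φ ⊥ ψ` is Witt equivalent to
`ω = ⟨⟨α₁,…,α_{n-2}⟩⟩ ⊗ [1, αₙ⁻¹ + α_{n+1}⁻¹] ⊥ α_{n-1} ⟨⟨α₁,…,α_{n-2}⟩⟩ ⊗ [1, αₙ⁻¹]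
⊥ αₙ ⟨⟨α₁,…,α_{n-2}⟩⟩ ⊗ [1, α_{n+1}⁻¹]`. -/
theorem iterLaurent_phi_psi_wittEquivalent_omega (k : Type) [Field k] [CharP k 2]
    (m : ℕ) :
    WittEquivalent (IterLaurent k (m + 3))
      ((quadPfister (IterLaurent k (m + 3))
          (Fin.snoc (fun i : Fin m => IterLaurent.var k (m + 3) (Fin.castLE (by omega) i))
            (IterLaurent.var k (m + 3) ⟨m, by omega⟩))
          (IterLaurent.var k (m + 3) ⟨m + 1, by omega⟩)⁻¹).prod
       (quadPfister (IterLaurent k (m + 3))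
          (Fin.snoc (fun i : Fin m => IterLaurent.var k (m + 3) (Fin.castLE (by omega) i))
            (IterLaurent.var k (m + 3) ⟨m + 1, by omega⟩))
          (IterLaurent.var k (m + 3) ⟨m + 2, by omega⟩)⁻¹))
      (((quadOfMatrix (IterLaurent k (m + 3))
          (quadPfisterMatrix (IterLaurent k (m + 3))
            (fun i : Fin m => IterLaurent.var k (m + 3) (Fin.castLE (by omega) i))
            ((IterLaurent.var k (m + 3) ⟨m + 1, by omega⟩)⁻¹ +
              (IterLaurent.var k (m + 3) ⟨m + 2, by omega⟩)⁻¹))).prod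
        (quadOfMatrix (IterLaurent k (m + 3))
          (IterLaurent.var k (m + 3) ⟨m, by omega⟩ •
            quadPfisterMatrix (IterLaurent k (m + 3))
              (fun i : Fin m => IterLaurent.var k (m + 3) (Fin.castLE (by omega) i))
              (IterLaurent.var k (m + 3) ⟨m + 1, by omega⟩)⁻¹))).prod
       (quadOfMatrix (IterLaurent k (m + 3))
          (IterLaurent.var k (m + 3) ⟨m + 1, by omega⟩ •
            quadPfisterMatrix (IterLaurent k (m + 3))
              (fun i : Fin m => IterLaurent.var k (m + 3) (Fin.castLE (by omega) i))
              (IterLaurent.var k (m + 3) ⟨m + 2, by omega⟩)⁻¹))) :=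
  keyWitt (IterLaurent k (m + 3)) m (IterLaurent.two_eq_zero k (m + 3)) _
    (fun i => IterLaurent.var_ne_zero k _ _) _ _ _ _
end

section
/- Let $F$ be a field of $\operatorname{char}(F) = 2$ and $n \geq 2$. If the $2$-rank of $F$ is at least $n+1$, i.e., $[F : F^2] \geq 2^{n+1}$, then $I^n F$ is not linked: there exist two anisotropic bilinear $n$-fold Pfister forms over $F$ that do not share a common $(n-1)$-fold Pfister factor. -/
/-- The `2^m` monomials `∏ uᵢ^{eᵢ}`, `e ∈ {0,1}^m`, are linearly independent over the
subfield `F² = {x² : x ∈ F}`; equivalently, `1, u₁, …, uₘ` generate over `F²` a subfield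
of degree `2^m` of `F`. In particular the existence of such a tuple of length `m` says
exactly that `[F : F²] ≥ 2^m`. -/
def TwoIndependent (F : Type) [Field F] {m : ℕ} (u : Fin m → F) : Prop :=
  ∀ c : (Fin m → Bool) → F,
    (∑ e : Fin m → Bool, c e ^ 2 * ∏ i, if e i then u i else 1) = 0 → ∀ e, c e = 0

namespace NLhelper

variable {F : Type} [Field F] [CharP F 2]
set_option linter.unusedSectionVars false

lemma two0 : (2:F) = 0 := by
  have := CharP.cast_eq_zero F 2; simpa using this

lemma sq_add (x y : F) : (x+y)^2 = x^2+y^2 := CharTwo.add_sq x y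

lemma addself (x : F) : x + x = 0 := CharTwo.add_self_eq_zero x

lemma eq_of_addzero {x y : F} (h : x + y = 0) : x = y := by
  linear_combination h - y * (two0 (F := F))

def mon {k : ℕ} (v : Fin k → F) (g : Fin k → Bool) : F := ∏ i, if g i then v i else 1

lemma mon_cons {k : ℕ} (x : F) (v : Fin k → F) (s : Bool) (g : Fin k → Bool) :
    mon (Fin.cons x v) (Fin.cons s g) = (if s then x else 1) * mon v g := by
  unfold mon
  rw [Fin.prod_univ_succ]
  simp

lemma mon_snoc {k : ℕ} (v : Fin k → F) (x : F) (g : Fin k → Bool) (s : Bool) :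
    mon (Fin.snoc v x) (Fin.snoc g s) = mon v g * (if s then x else 1) := by
  unfold mon
  rw [Fin.prod_univ_castSucc]
  simp

lemma mon_false {k : ℕ} (v : Fin k → F) : mon v (fun _ => false) = 1 := by
  simp [mon]

lemma sum_split {k : ℕ} (f : (Fin (k+1) → Bool) → F) :
    ∑ g : Fin (k+1) → Bool, f g
      = ∑ s : Bool, ∑ g : Fin k → Bool, f (Fin.cons s g) := by
  rw [← (Fintype.sum_equiv (Fin.consEquiv (fun _ => Bool)) _ f (fun p => rfl)),
    Fintype.sum_prod_type]
  rfl

variable {m : ℕ} (u : Fin (m+3) → F)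

/-- the tail part `u₃, …` of `u`. -/
def wt : Fin m → F := fun i => u i.succ.succ.succ

/-- the "low" monomial in `u₀, u₁, u₂`. -/
def TTT (t s0 s1 : Bool) : F :=
  (if t then u 0 else 1) *
    ((if s0 then u 1 else 1) * (if s1 then u 2 else 1))

lemma cons3_zero (t s0 s1 : Bool) (r : Fin m → Bool) :
    (Fin.cons t (Fin.cons s0 (Fin.cons s1 r)) : Fin (m+3) → Bool) 0 = t := rfl

lemma cons3_one (t s0 s1 : Bool) (r : Fin m → Bool) :
    (Fin.cons t (Fin.cons s0 (Fin.cons s1 r)) : Fin (m+3) → Bool) 1 = s0 := by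
  rw [← Fin.succ_zero_eq_one, Fin.cons_succ, Fin.cons_zero]

lemma cons3_two (t s0 s1 : Bool) (r : Fin m → Bool) :
    (Fin.cons t (Fin.cons s0 (Fin.cons s1 r)) : Fin (m+3) → Bool) 2 = s1 := by
  rw [← Fin.succ_one_eq_two, Fin.cons_succ, ← Fin.succ_zero_eq_one, Fin.cons_succ,
    Fin.cons_zero]

lemma cons3_rest (t s0 s1 : Bool) (r : Fin m → Bool) (i : Fin m) :
    (Fin.cons t (Fin.cons s0 (Fin.cons s1 r)) : Fin (m+3) → Bool) i.succ.succ.succ = r i := by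
  rw [Fin.cons_succ, Fin.cons_succ, Fin.cons_succ]

lemma u_decomp : u = Fin.cons (u 0) (Fin.cons (u 1)
    (Fin.cons (u 2) (wt u))) := by
  funext i
  induction i using Fin.cases with
  | zero => simp
  | succ i =>
    induction i using Fin.cases with
    | zero => rw [Fin.cons_succ, Fin.cons_zero, Fin.succ_zero_eq_one]
    | succ i =>
      induction i using Fin.cases with
      | zero =>
        rw [Fin.cons_succ, Fin.cons_succ, Fin.cons_zero, Fin.succ_zero_eq_one,
          Fin.succ_one_eq_two]
      | succ i => simp [wt, Fin.cons_succ]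

lemma mon_u (t s0 s1 : Bool) (r : Fin m → Bool) :
    mon u (Fin.cons t (Fin.cons s0 (Fin.cons s1 r)))
      = TTT u t s0 s1 * mon (wt u) r := by
  conv_lhs => rw [u_decomp u]
  rw [mon_cons, mon_cons, mon_cons, TTT]
  ring

lemma indep4 (hu : TwoIndependent F u) (C : Bool → Bool → Bool → (Fin m → Bool) → F)
    (h : ∑ t : Bool, ∑ s0 : Bool, ∑ s1 : Bool, ∑ r : Fin m → Bool,
        (C t s0 s1 r)^2 * (TTT u t s0 s1 * mon (wt u) r) = 0) :
    ∀ t s0 s1 r, C t s0 s1 r = 0 := by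
  intro t s0 s1 r
  have key := hu (fun e => C (e 0) (e 1) (e 2)
    (fun i => e i.succ.succ.succ)) ?_ (Fin.cons t (Fin.cons s0 (Fin.cons s1 r)))
  · simpa only [cons3_zero, cons3_one, cons3_two, cons3_rest] using key
  · rw [sum_split]
    refine h ▸ (Finset.sum_congr rfl fun t' _ => ?_)
    rw [sum_split]
    refine Finset.sum_congr rfl fun s0' _ => ?_
    rw [sum_split]
    refine Finset.sum_congr rfl fun s1' _ => ?_
    refine Finset.sum_congr rfl fun r' _ => ?_
    rw [show (∏ i, if (Fin.cons t' (Fin.cons s0' (Fin.cons s1' r')) : Fin (m+3) → Bool) i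
        then u i else 1) = mon u (Fin.cons t' (Fin.cons s0' (Fin.cons s1' r'))) from rfl,
      mon_u]
    simp only [cons3_zero, cons3_one, cons3_two, cons3_rest]

lemma indep8 (hu : TwoIndependent F u) (K : Bool → Bool → Bool → F)
    (h : ∑ t : Bool, ∑ s0 : Bool, ∑ s1 : Bool, (K t s0 s1)^2 * TTT u t s0 s1 = 0) :
    ∀ t s0 s1, K t s0 s1 = 0 := by
  intro t s0 s1
  have key := indep4 u hu
    (fun t s0 s1 r => if r = (fun _ => false) then K t s0 s1 else 0) ?_ t s0 s1
    (fun _ => false)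
  · simpa using key
  · have inner : ∀ t' s0' s1' : Bool,
        (∑ r : Fin m → Bool, (if r = (fun _ => false) then K t' s0' s1' else 0)^2
          * (TTT u t' s0' s1' * mon (wt u) r)) = K t' s0' s1' ^ 2 * TTT u t' s0' s1' := by
      intro t' s0' s1'
      rw [Finset.sum_eq_single (fun _ : Fin m => false)]
      · simp [mon_false]
      · intro r _ hr
        simp [hr]
      · intro habs
        exact absurd (Finset.mem_univ _) habs
    calc ∑ t' : Bool, ∑ s0' : Bool, ∑ s1' : Bool, ∑ r : Fin m → Bool,
          (if r = (fun _ => false) then K t' s0' s1' else 0)^2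
            * (TTT u t' s0' s1' * mon (wt u) r)
        = ∑ t' : Bool, ∑ s0' : Bool, ∑ s1' : Bool, K t' s0' s1' ^ 2 * TTT u t' s0' s1' := by
          refine Finset.sum_congr rfl fun t' _ => ?_
          refine Finset.sum_congr rfl fun s0' _ => ?_
          exact Finset.sum_congr rfl fun s1' _ => inner t' s0' s1'
      _ = 0 := h

lemma u_ne_zero (hu : TwoIndependent F u) (j : Fin (m+3)) : u j ≠ 0 := by
  intro h0
  have key := hu (fun e => if e = (fun i => decide (i = j)) then 1 else 0) ?_
    (fun i => decide (i = j))
  · simpa using key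
  · rw [Finset.sum_eq_single (fun i => decide (i = j))]
    · have h1 : ((fun e => if e = (fun i => decide (i = j)) then (1:F) else 0)
          (fun i => decide (i = j))) = 1 := by simp
      rw [if_pos rfl, one_pow, one_mul, Finset.prod_eq_single j]
      · simpa using h0
      · intro i _ hij
        simp [hij]
      · intro habs
        exact absurd (Finset.mem_univ _) habs
    · intro e _ he
      simp [he]
    · intro habs
      exact absurd (Finset.mem_univ _) habs

/-- first entry of `b` is nonzero -/
lemma b0_ne (hu : TwoIndependent F u) : u 1 + u 0 ≠ 0 := by
  intro h0
  have key := indep8 u hu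
    (fun t s0 s1 => if s1 then 0 else if t = s0 then 0 else 1) ?_ true false false
  · simpa using key
  · simp [Fintype.sum_bool, TTT]
    linear_combination h0

/-- second entry of `b` is nonzero -/
lemma b1_ne (hu : TwoIndependent F u) : u 2 + u 0 + 1 ≠ 0 := by
  intro h0
  have key := indep8 u hu
    (fun t s0 s1 => if s0 then 0 else if t && s1 then 0 else 1) ?_ false false false
  · simpa using key
  · simp [Fintype.sum_bool, TTT]
    linear_combination h0

/-- the tuple `a`. -/
def aa : Fin (m+2) → F := Fin.cons (u 1) (Fin.cons (u 2) (wt u))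

/-- the tuple `b`. -/
def bb : Fin (m+2) → F := Fin.cons (u 1 + u 0) (Fin.cons (u 2 + u 0 + 1) (wt u))

def Pc (v : (Fin (m+2) → Bool) → F) : Bool → Bool → Bool → (Fin m → Bool) → F
  | false, s0, s1, r => v (Fin.cons s0 (Fin.cons s1 r))
  | true, _, _, _ => 0

def Qc (u : Fin (m+3) → F) (v : (Fin (m+2) → Bool) → F) :
    Bool → Bool → Bool → (Fin m → Bool) → F
  | false, false, false, r => v (Fin.cons false (Fin.cons false r))
      + v (Fin.cons false (Fin.cons true r)) + u 0 * v (Fin.cons true (Fin.cons true r))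
  | false, true, false, r => v (Fin.cons true (Fin.cons false r))
      + v (Fin.cons true (Fin.cons true r))
  | false, false, true, r => v (Fin.cons false (Fin.cons true r))
  | false, true, true, r => v (Fin.cons true (Fin.cons true r))
  | true, false, false, r => v (Fin.cons true (Fin.cons false r))
      + v (Fin.cons false (Fin.cons true r)) + v (Fin.cons true (Fin.cons true r))
  | true, true, false, r => v (Fin.cons true (Fin.cons true r))
  | true, false, true, r => v (Fin.cons true (Fin.cons true r))
  | true, true, true, _ => 0

lemma mon_aa (s0 s1 : Bool) (r : Fin m → Bool) :
    mon (aa u) (Fin.cons s0 (Fin.cons s1 r))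
      = (if s0 then u 1 else 1) * ((if s1 then u 2 else 1) * mon (wt u) r) := by
  rw [aa, mon_cons, mon_cons]

lemma mon_bb (s0 s1 : Bool) (r : Fin m → Bool) :
    mon (bb u) (Fin.cons s0 (Fin.cons s1 r))
      = (if s0 then u 1 + u 0 else 1) * ((if s1 then u 2 + u 0 + 1 else 1) * mon (wt u) r) := by
  rw [bb, mon_cons, mon_cons]

lemma sumA (v : (Fin (m+2) → Bool) → F) :
    ∑ g : Fin (m+2) → Bool, (v g)^2 * mon (aa u) g
      = ∑ t : Bool, ∑ s0 : Bool, ∑ s1 : Bool, ∑ r : Fin m → Bool,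
          (Pc v t s0 s1 r)^2 * (TTT u t s0 s1 * mon (wt u) r) := by
  rw [Fintype.sum_bool]
  have h1 : ∑ s0 : Bool, ∑ s1 : Bool, ∑ r : Fin m → Bool,
      (Pc v true s0 s1 r)^2 * (TTT u true s0 s1 * mon (wt u) r) = 0 := by
    simp [Pc]
  rw [h1, zero_add]
  simp only [sum_split]
  refine Finset.sum_congr rfl fun s0 _ => ?_
  refine Finset.sum_congr rfl fun s1 _ => ?_
  refine Finset.sum_congr rfl fun r _ => ?_
  rw [mon_aa]
  show _ = (v (Fin.cons s0 (Fin.cons s1 r)))^2 * (TTT u false s0 s1 * mon (wt u) r)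
  simp only [TTT, Bool.false_eq_true, if_false]
  ring

lemma sumB (v : (Fin (m+2) → Bool) → F) :
    ∑ g : Fin (m+2) → Bool, (v g)^2 * mon (bb u) g
      = ∑ t : Bool, ∑ s0 : Bool, ∑ s1 : Bool, ∑ r : Fin m → Bool,
          (Qc u v t s0 s1 r)^2 * (TTT u t s0 s1 * mon (wt u) r) := by
  simp only [sum_split]
  simp only [Fintype.sum_bool]
  simp only [← Finset.sum_add_distrib]
  refine Finset.sum_congr rfl fun r _ => ?_
  simp only [mon_bb, Qc, TTT]
  simp only [Bool.false_eq_true, Bool.true_eq_false, if_false, if_true, ite_true, ite_false,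
    eq_self_iff_true, sq_add, mul_pow]
  ring

lemma pf_diag {k : ℕ} (a : Fin k → F) : pfisterMatrix F a = Matrix.diagonal (mon a) := rfl

lemma dot_diag {ι : Type} [Fintype ι] [DecidableEq ι] (μ : ι → F) (v : ι → F) :
    dotProduct v ((Matrix.diagonal μ).mulVec v) = ∑ g, (v g)^2 * μ g := by
  unfold dotProduct
  refine Finset.sum_congr rfl fun g _ => ?_
  rw [Matrix.mulVec_diagonal]
  ring

lemma anisoA (hu : TwoIndependent F u) : (pfisterMatrix F (aa u)).BilinAnisotropic := by
  intro v hv hdot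
  apply hv
  rw [pf_diag, dot_diag] at hdot
  rw [sumA] at hdot
  have key := indep4 u hu (Pc v) hdot
  funext g
  induction g using Fin.consCases with
  | cons s0 g =>
  induction g using Fin.consCases with
  | cons s1 r =>
  exact key false s0 s1 r

lemma anisoB (hu : TwoIndependent F u) : (pfisterMatrix F (bb u)).BilinAnisotropic := by
  intro v hv hdot
  apply hv
  rw [pf_diag, dot_diag] at hdot
  rw [sumB] at hdot
  have key := indep4 u hu (Qc u v) hdot
  have hTT : ∀ r, v (Fin.cons true (Fin.cons true r)) = 0 :=
    fun r => key true true false r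
  have hFT : ∀ r, v (Fin.cons false (Fin.cons true r)) = 0 :=
    fun r => key false false true r
  have hTF : ∀ r, v (Fin.cons true (Fin.cons false r)) = 0 := by
    intro r
    have := key false true false r
    rw [Qc, hTT r, add_zero] at this
    exact this
  have hFF : ∀ r, v (Fin.cons false (Fin.cons false r)) = 0 := by
    intro r
    have := key false false false r
    rw [Qc, hTT r, hFT r, mul_zero, add_zero, add_zero] at this
    exact this
  funext g
  induction g using Fin.consCases with
  | cons s0 g =>
  induction g using Fin.consCases with
  | cons s1 r =>
  cases s0 <;> cases s1
  · exact hFF r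
  · exact hFT r
  · exact hTF r
  · exact hTT r

lemma congr_entry {ι : Type} [Fintype ι] [DecidableEq ι] (P : Matrix ι ι F) (μ : ι → F)
    (j k : ι) :
    (P.transpose * Matrix.diagonal μ * P) j k = ∑ g, P g j * μ g * P g k := by
  rw [Matrix.mul_apply]
  refine Finset.sum_congr rfl fun g _ => ?_
  rw [Matrix.mul_diagonal, Matrix.transpose_apply]

/-- index of the `c`-monomial `z` inside the Pfister index set of `⟨⟨c,d⟩⟩`. -/
def idxZ {m : ℕ} (z : Bool × (Fin m → Bool)) : Fin (m+2) → Bool :=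
  Fin.cons z.1 (Fin.snoc z.2 false)

lemma idxZ_inj {m : ℕ} : Function.Injective (idxZ (m := m)) := by
  intro z z' h
  have h0 : z.1 = z'.1 := by
    have := congrFun h 0
    simpa [idxZ] using this
  have hr : ∀ i : Fin m, z.2 i = z'.2 i := by
    intro i
    have := congrFun h (Fin.succ (Fin.castSucc i))
    simpa [idxZ, Fin.cons_succ, Fin.snoc_castSucc] using this
  exact Prod.ext h0 (funext hr)

lemma mon_idx (c : Fin (m+1) → F) (x : F) (z : Bool × (Fin m → Bool)) :
    mon (Fin.snoc c x) (idxZ z) = mon c (Fin.cons z.1 z.2) := by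
  rw [idxZ, Fin.cons_snoc_eq_snoc_cons, mon_snoc]
  simp

lemma no_common (hu : TwoIndependent F u) (c : Fin (m+1) → F) (d e : F)
    (h1 : Matrix.BilinIsometric (pfisterMatrix F (aa u)) (pfisterMatrix F (Fin.snoc c d)))
    (h2 : Matrix.BilinIsometric (pfisterMatrix F (bb u)) (pfisterMatrix F (Fin.snoc c e))) :
    False := by
  classical
  obtain ⟨P, hPu, hPeq⟩ := h1
  obtain ⟨Q, hQu, hQeq⟩ := h2
  set σt := (Bool × (Fin m → Bool))
  -- the two column families
  set pp : σt → (Fin (m+2) → Bool) → F := fun z g => P g (idxZ z) with hpp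
  set qq : σt → (Fin (m+2) → Bool) → F := fun z g => Q g (idxZ z) with hqq
  have entryP : ∀ z z' : σt,
      (∑ g, pp z g * mon (aa u) g * pp z' g)
        = if z = z' then mon c (Fin.cons z.1 z.2) else 0 := by
    intro z z'
    have h := congrFun (congrFun hPeq (idxZ z)) (idxZ z')
    rw [pf_diag (aa u), congr_entry, pf_diag (Fin.snoc c d), Matrix.diagonal_apply] at h
    rw [← h]
    by_cases hzz : z = z'
    · subst hzz
      rw [if_pos rfl, if_pos rfl, mon_idx]
    · rw [if_neg hzz, if_neg (fun hc => hzz (idxZ_inj hc))]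
  have entryQ : ∀ z z' : σt,
      (∑ g, qq z g * mon (bb u) g * qq z' g)
        = if z = z' then mon c (Fin.cons z.1 z.2) else 0 := by
    intro z z'
    have h := congrFun (congrFun hQeq (idxZ z)) (idxZ z')
    rw [pf_diag (bb u), congr_entry, pf_diag (Fin.snoc c e), Matrix.diagonal_apply] at h
    rw [← h]
    by_cases hzz : z = z'
    · subst hzz
      rw [if_pos rfl, if_pos rfl, mon_idx]
    · rw [if_neg hzz, if_neg (fun hc => hzz (idxZ_inj hc))]
  -- the coordinate relations
  have hrel : ∀ z : σt, ∀ t s0 s1 r,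
      Pc (pp z) t s0 s1 r + Qc u (qq z) t s0 s1 r = 0 := by
    intro z
    apply indep4 u hu
    have expand : ∑ t : Bool, ∑ s0 : Bool, ∑ s1 : Bool, ∑ r : Fin m → Bool,
        (Pc (pp z) t s0 s1 r + Qc u (qq z) t s0 s1 r)^2 * (TTT u t s0 s1 * mon (wt u) r)
        = (∑ t : Bool, ∑ s0 : Bool, ∑ s1 : Bool, ∑ r : Fin m → Bool,
            (Pc (pp z) t s0 s1 r)^2 * (TTT u t s0 s1 * mon (wt u) r))
          + ∑ t : Bool, ∑ s0 : Bool, ∑ s1 : Bool, ∑ r : Fin m → Bool,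
            (Qc u (qq z) t s0 s1 r)^2 * (TTT u t s0 s1 * mon (wt u) r) := by
      simp only [sq_add, add_mul, Finset.sum_add_distrib]
    have hP2 : ∑ g, (pp z g)^2 * mon (aa u) g = mon c (Fin.cons z.1 z.2) := by
      have h0 := entryP z z
      rw [if_pos rfl] at h0
      rw [← h0]
      exact Finset.sum_congr rfl fun g _ => by ring
    have hQ2 : ∑ g, (qq z g)^2 * mon (bb u) g = mon c (Fin.cons z.1 z.2) := by
      have h0 := entryQ z z
      rw [if_pos rfl] at h0
      rw [← h0]
      exact Finset.sum_congr rfl fun g _ => by ring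
    rw [expand, ← sumA, ← sumB, hP2, hQ2, addself]
  -- individual relations
  have relTTq : ∀ (z : σt) r, qq z (Fin.cons true (Fin.cons true r)) = 0 := by
    intro z r
    have h0 := hrel z true true false r
    simpa [Pc, Qc] using h0
  have relTTp : ∀ (z : σt) r, pp z (Fin.cons true (Fin.cons true r)) = 0 := by
    intro z r
    have h0 := hrel z false true true r
    simp only [Pc, Qc] at h0
    rw [relTTq z r, add_zero] at h0
    exact h0
  have relFTq : ∀ (z : σt) r,
      qq z (Fin.cons false (Fin.cons true r)) = qq z (Fin.cons true (Fin.cons false r)) := by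
    intro z r
    have h0 := hrel z true false false r
    simp only [Pc, Qc] at h0
    rw [relTTq z r, add_zero, zero_add] at h0
    exact (eq_of_addzero h0).symm
  have relFTp : ∀ (z : σt) r,
      pp z (Fin.cons false (Fin.cons true r)) = qq z (Fin.cons false (Fin.cons true r)) := by
    intro z r
    have h0 := hrel z false false true r
    simp only [Pc, Qc] at h0
    exact eq_of_addzero h0
  have relTFp : ∀ (z : σt) r,
      pp z (Fin.cons true (Fin.cons false r)) = qq z (Fin.cons true (Fin.cons false r)) := by
    intro z r
    have h0 := hrel z false true false r
    simp only [Pc, Qc] at h0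
    rw [relTTq z r, add_zero] at h0
    exact eq_of_addzero h0
  -- combined relations
  have relPFT : ∀ (z : σt) r,
      pp z (Fin.cons false (Fin.cons true r)) = pp z (Fin.cons true (Fin.cons false r)) := by
    intro z r
    rw [relFTp, relFTq, ← relTFp]
  have relQFF : ∀ (z : σt) r,
      qq z (Fin.cons false (Fin.cons false r))
        = pp z (Fin.cons false (Fin.cons false r)) + pp z (Fin.cons true (Fin.cons false r)) := by
    intro z r
    have h0 := hrel z false false false r
    simp only [Pc, Qc] at h0
    rw [relTTq z r, mul_zero, add_zero] at h0
    rw [← relFTp, relPFT] at h0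
    linear_combination h0 - (pp z (Fin.cons false (Fin.cons false r))
      + pp z (Fin.cons true (Fin.cons false r))) * (two0 (F := F))
  -- the reduced coordinate matrix and the difference form
  set R : Matrix σt σt F := (fun z y => pp z (Fin.cons y.1 (Fin.cons false y.2))) with hR
  set A : Matrix σt σt F :=
    (fun y y' => if y.1 ≠ y'.1 ∧ y.2 = y'.2 then mon (wt u) y.2 else 0) with hA
  -- R is invertible
  have hdetR : R.det ≠ 0 := by
    intro hdet
    have hdet' : R.transpose.det = 0 := by rw [Matrix.det_transpose]; exact hdet
    obtain ⟨t, ht0, htv⟩ := (Matrix.exists_mulVec_eq_zero_iff).2 hdet'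
    apply ht0
    have hty : ∀ y : σt, ∑ z, t z * pp z (Fin.cons y.1 (Fin.cons false y.2)) = 0 := by
      intro y
      have hy := congrFun htv y
      rw [Matrix.mulVec, dotProduct, Pi.zero_apply] at hy
      rw [← hy]
      refine Finset.sum_congr rfl fun z _ => ?_
      rw [Matrix.transpose_apply, hR, mul_comm]
    have hallg : ∀ g, ∑ z, t z * pp z g = 0 := by
      intro g
      induction g using Fin.consCases with
      | cons s0 g =>
      induction g using Fin.consCases with
      | cons s1 r =>
      cases s0 <;> cases s1
      · exact hty (false, r)
      · calc ∑ z, t z * pp z (Fin.cons false (Fin.cons true r))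
            = ∑ z, t z * pp z (Fin.cons true (Fin.cons false r)) :=
              Finset.sum_congr rfl fun z _ => by rw [relPFT]
          _ = 0 := hty (true, r)
      · exact hty (true, r)
      · calc ∑ z, t z * pp z (Fin.cons true (Fin.cons true r))
            = ∑ z, t z * 0 := Finset.sum_congr rfl fun z _ => by rw [relTTp]
          _ = 0 := by simp
    set Tf : (Fin (m+2) → Bool) → F := fun j => ∑ z, if j = idxZ z then t z else 0 with hTfdef
    have hPT : P.mulVec Tf = 0 := by
      funext g
      show ∑ j, P g j * Tf j = 0
      calc ∑ j, P g j * Tf j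
          = ∑ j, ∑ z, (if j = idxZ z then P g j * t z else 0) := by
            refine Finset.sum_congr rfl fun j _ => ?_
            rw [hTfdef, Finset.mul_sum]
            refine Finset.sum_congr rfl fun z _ => ?_
            rw [mul_ite, mul_zero]
        _ = ∑ z, ∑ j, (if j = idxZ z then P g j * t z else 0) := Finset.sum_comm
        _ = ∑ z, P g (idxZ z) * t z := by
            refine Finset.sum_congr rfl fun z _ => ?_
            rw [Finset.sum_ite_eq' Finset.univ (idxZ z) (fun j => P g j * t z)]
            simp
        _ = 0 := by
            rw [← hallg g]
            exact Finset.sum_congr rfl fun z _ => by rw [mul_comm, hpp]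
    have hTf0 : Tf = 0 := by
      have h2 : (P⁻¹ * P).mulVec Tf = Tf := by
        rw [Matrix.nonsing_inv_mul P hPu, Matrix.one_mulVec]
      rw [← Matrix.mulVec_mulVec, hPT, Matrix.mulVec_zero] at h2
      exact h2.symm
    funext z
    have hz := congrFun hTf0 (idxZ z)
    rw [hTfdef] at hz
    simp only [idxZ_inj.eq_iff] at hz
    rw [Finset.sum_ite_eq Finset.univ z t] at hz
    simpa using hz
  -- the Gram identity
  have hRA : R * A * R.transpose = 0 := by
    ext z z'
    have hcol : ∀ y' : σt, (R * A) z y' = R z (!y'.1, y'.2) * mon (wt u) y'.2 := by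
      rintro ⟨t', r'⟩
      rw [Matrix.mul_apply, Fintype.sum_prod_type, Fintype.sum_bool]
      cases t'
      · have e1 : ∑ r, R z (true, r) * A (true, r) (false, r')
            = R z (true, r') * mon (wt u) r' := by
          rw [Finset.sum_eq_single r']
          · rw [hA]; simp
          · intro r _ hr; rw [hA]; simp [hr]
          · intro habs; exact absurd (Finset.mem_univ _) habs
        have e2 : ∑ r, R z (false, r) * A (false, r) (false, r') = 0 := by
          refine Finset.sum_eq_zero fun r _ => ?_
          rw [hA]; simp
        rw [e1, e2, add_zero]
        simp
      · have e1 : ∑ r, R z (false, r) * A (false, r) (true, r')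
            = R z (false, r') * mon (wt u) r' := by
          rw [Finset.sum_eq_single r']
          · rw [hA]; simp
          · intro r _ hr; rw [hA]; simp [hr]
          · intro habs; exact absurd (Finset.mem_univ _) habs
        have e2 : ∑ r, R z (true, r) * A (true, r) (true, r') = 0 := by
          refine Finset.sum_eq_zero fun r _ => ?_
          rw [hA]; simp
        rw [e1, e2, zero_add]
        simp
    show (R * A * R.transpose) z z' = 0
    calc (R * A * R.transpose) z z'
        = ∑ y' : σt, R z (!y'.1, y'.2) * mon (wt u) y'.2 * R z' y' := by
          rw [Matrix.mul_apply]
          exact Finset.sum_congr rfl fun y' _ => by rw [hcol, Matrix.transpose_apply]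
      _ = ∑ r : Fin m → Bool,
            (R z (false, r) * mon (wt u) r * R z' (true, r)
              + R z (true, r) * mon (wt u) r * R z' (false, r)) := by
          rw [Fintype.sum_prod_type, Fintype.sum_bool, ← Finset.sum_add_distrib]
          refine Finset.sum_congr rfl fun r _ => ?_
          simp
      _ = (∑ g, pp z g * mon (aa u) g * pp z' g)
            + (∑ g, qq z g * mon (bb u) g * qq z' g) := by
          rw [eq_comm]
          simp only [sum_split]
          simp only [Fintype.sum_bool]
          simp only [← Finset.sum_add_distrib]
          refine Finset.sum_congr rfl fun r _ => ?_
          rw [relTTq z r, relTTq z' r, relTTp z r, relTTp z' r, relPFT z r, relPFT z' r,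
            relQFF z r, relQFF z' r, relFTq z r, relFTq z' r, ← relTFp z r, ← relTFp z' r]
          simp only [mon_aa, mon_bb, hR]
          simp only [Bool.false_eq_true, Bool.true_eq_false, if_false, if_true, ite_true,
            ite_false]
          linear_combination (pp z (Fin.cons false (Fin.cons false r))
              * pp z' (Fin.cons false (Fin.cons false r))
            + pp z (Fin.cons true (Fin.cons false r)) * pp z' (Fin.cons true (Fin.cons false r))
              * (u 0 + u 1 + u 2 + 1)) * mon (wt u) r * (two0 (F := F))
      _ = 0 := by
          rw [entryP, entryQ]
          by_cases hzz : z = z'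
          · rw [if_pos hzz, addself]
          · rw [if_neg hzz, add_zero]
  -- deduce A = 0
  have hRdet : IsUnit R.det := isUnit_iff_ne_zero.2 hdetR
  have hRTdet : IsUnit R.transpose.det := by rw [Matrix.det_transpose]; exact hRdet
  have hART : A * R.transpose = 0 := by
    calc A * R.transpose = (R⁻¹ * R) * (A * R.transpose) := by
          rw [Matrix.nonsing_inv_mul R hRdet, Matrix.one_mul]
      _ = R⁻¹ * (R * A * R.transpose) := by
          rw [Matrix.mul_assoc, Matrix.mul_assoc]
      _ = 0 := by rw [hRA, Matrix.mul_zero]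
  have hA0 : A = 0 := by
    calc A = A * (R.transpose * R.transpose⁻¹) := by
          rw [Matrix.mul_nonsing_inv _ hRTdet, Matrix.mul_one]
      _ = (A * R.transpose) * R.transpose⁻¹ := by rw [Matrix.mul_assoc]
      _ = 0 := by rw [hART, Matrix.zero_mul]
  have hone := congrFun (congrFun hA0 ((false, fun _ => false) : σt))
    ((true, fun _ => false) : σt)
  rw [hA] at hone
  simp only [mon_false] at hone
  norm_num at hone

end NLhelper

/-- Let `F` be a field of characteristic `2` and `n = m+2 ≥ 2`. If the
`2`-rank of `F` is at least `n+1`, i.e. `[F : F²] ≥ 2^{n+1}` (expressed by the existence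
of an `(n+1)`-tuple whose `2^{n+1}` monomials are `F²`-linearly independent), then `IⁿF`
is not linked: there are two anisotropic bilinear `n`-fold Pfister forms over `F` with no
common `(n-1)`-fold Pfister factor. -/
theorem bilinPfister_not_linked_of_large_two_rank (F : Type) [Field F] [CharP F 2]
    (m : ℕ) (hrank : ∃ u : Fin (m + 3) → F, TwoIndependent F u) :
    ∃ a b : Fin (m + 2) → F, (∀ i, a i ≠ 0) ∧ (∀ i, b i ≠ 0) ∧
      (pfisterMatrix F a).BilinAnisotropic ∧ (pfisterMatrix F b).BilinAnisotropic ∧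
      ¬ ∃ c : Fin (m + 1) → F, (∀ i, c i ≠ 0) ∧
          ∃ d e : F, d ≠ 0 ∧ e ≠ 0 ∧
            Matrix.BilinIsometric (pfisterMatrix F a) (pfisterMatrix F (Fin.snoc c d)) ∧
            Matrix.BilinIsometric (pfisterMatrix F b) (pfisterMatrix F (Fin.snoc c e)) := by
  obtain ⟨u, hu⟩ := hrank
  refine ⟨NLhelper.aa u, NLhelper.bb u, ?_, ?_, NLhelper.anisoA u hu, NLhelper.anisoB u hu, ?_⟩
  · intro i
    induction i using Fin.cases with
    | zero =>
      rw [NLhelper.aa, Fin.cons_zero]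
      exact NLhelper.u_ne_zero u hu 1
    | succ j =>
      rw [NLhelper.aa, Fin.cons_succ]
      induction j using Fin.cases with
      | zero =>
        rw [Fin.cons_zero]
        exact NLhelper.u_ne_zero u hu 2
      | succ k =>
        rw [Fin.cons_succ]
        exact NLhelper.u_ne_zero u hu _
  · intro i
    induction i using Fin.cases with
    | zero =>
      rw [NLhelper.bb, Fin.cons_zero]
      exact NLhelper.b0_ne u hu
    | succ j =>
      rw [NLhelper.bb, Fin.cons_succ]
      induction j using Fin.cases with
      | zero =>
        rw [Fin.cons_zero]
        exact NLhelper.b1_ne u hu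
      | succ k =>
        rw [Fin.cons_succ]
        exact NLhelper.u_ne_zero u hu _
  · rintro ⟨c, -, d, e, -, -, hiso1, hiso2⟩
    exact NLhelper.no_common u hu c d e hiso1 hiso2
end
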